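/- Let c > 0, 0 < s < 1, p ∈ ℝ. The function g_s(x,y,t) := (log^{2p}(1+⟨t⟩)/log^{2p}(1+⟨x⟩)) · (⟨t⟩^{2s}/⟨x⟩^{2s}) · y²/((t−x)² + y²) is uniformly bounded on the region {(x,y,t) : |y| ≤ c⟨x⟩} × ℝ minus the set {y = 0, x = t}. -/

import Mathlib

open Real

/-- Power beats log: explicit bound. -/
lemma aux_log_pow (q ε : ℝ) (hq : 0 ≤ q) (hε : 0 < ε) :
    ∃ C : ℝ, 0 ≤ C ∧ ∀ u : ℝ, 2 ≤ u →
      (1 + Real.log u / Real.log 2) ^ q * u ^ (-ε) ≤ C := by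
  set δ : ℝ := ε / (2 * (q + 1)) with hδdef
  have hδ : 0 < δ := by positivity
  have hl2 : (0:ℝ) < Real.log 2 := Real.log_pos (by norm_num)
  refine ⟨(2 / (δ * Real.log 2)) ^ q, Real.rpow_nonneg (by positivity) q, ?_⟩
  intro u hu
  have hu0 : (0:ℝ) < u := by linarith
  have hu1 : (1:ℝ) ≤ u := by linarith
  have hlu : Real.log 2 ≤ Real.log u := Real.log_le_log (by norm_num) hu
  have h1 : 1 + Real.log u / Real.log 2 ≤ 2 / (δ * Real.log 2) * u ^ δ := by
    have h2 : Real.log u ≤ u ^ δ / δ := Real.log_le_rpow_div hu0.le hδ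
    have h3 : 1 ≤ Real.log u / Real.log 2 := (one_le_div hl2).mpr hlu
    have : 1 + Real.log u / Real.log 2 ≤ 2 * (Real.log u / Real.log 2) := by linarith
    calc 1 + Real.log u / Real.log 2 ≤ 2 * (Real.log u / Real.log 2) := this
      _ ≤ 2 * ((u ^ δ / δ) / Real.log 2) := by gcongr
      _ = 2 / (δ * Real.log 2) * u ^ δ := by field_simp
  have hbase0 : (0:ℝ) ≤ 1 + Real.log u / Real.log 2 := by
    have h3 : 1 ≤ Real.log u / Real.log 2 := (one_le_div hl2).mpr hlu
    linarith
  have h4 : (1 + Real.log u / Real.log 2) ^ q ≤ (2 / (δ * Real.log 2)) ^ q * u ^ (δ * q) := by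
    calc (1 + Real.log u / Real.log 2) ^ q ≤ (2 / (δ * Real.log 2) * u ^ δ) ^ q :=
          Real.rpow_le_rpow hbase0 h1 hq
      _ = (2 / (δ * Real.log 2)) ^ q * (u ^ δ) ^ q :=
          Real.mul_rpow (by positivity) (by positivity)
      _ = (2 / (δ * Real.log 2)) ^ q * u ^ (δ * q) := by
          rw [← Real.rpow_mul hu0.le]
  have h5 : u ^ (δ * q) * u ^ (-ε) = u ^ (δ * q - ε) := by
    rw [← Real.rpow_add hu0]; ring_nf
  have h6 : δ * q - ε ≤ 0 := by
    have : δ * q ≤ ε / 2 := by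
      rw [hδdef]
      rw [div_mul_eq_mul_div, div_le_div_iff₀ (by positivity) (by norm_num)]
      nlinarith
    linarith
  have h7 : u ^ (δ * q - ε) ≤ 1 := Real.rpow_le_one_of_one_le_of_nonpos hu1 h6
  calc (1 + Real.log u / Real.log 2) ^ q * u ^ (-ε)
      ≤ ((2 / (δ * Real.log 2)) ^ q * u ^ (δ * q)) * u ^ (-ε) := by
        apply mul_le_mul_of_nonneg_right h4 (Real.rpow_nonneg hu0.le _)
    _ = (2 / (δ * Real.log 2)) ^ q * (u ^ (δ * q) * u ^ (-ε)) := by ring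
    _ = (2 / (δ * Real.log 2)) ^ q * u ^ (δ * q - ε) := by rw [h5]
    _ ≤ (2 / (δ * Real.log 2)) ^ q * 1 := by
        apply mul_le_mul_of_nonneg_left h7 (Real.rpow_nonneg (by positivity) _)
    _ = (2 / (δ * Real.log 2)) ^ q := mul_one _

/-- Ratio of logs bounded by log of ratio. -/
lemma aux_logratio (A B : ℝ) (hA : 1 ≤ A) (hAB : A ≤ B) :
    Real.log (1 + B) / Real.log (1 + A) ≤ 1 + Real.log (B / A) / Real.log 2 := by
  have hB : 1 ≤ B := le_trans hA hAB
  have hA0 : (0:ℝ) < A := by linarith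
  have hl2 : (0:ℝ) < Real.log 2 := Real.log_pos (by norm_num)
  have hLA : Real.log 2 ≤ Real.log (1 + A) := Real.log_le_log (by norm_num) (by linarith)
  have hLA0 : (0:ℝ) < Real.log (1 + A) := lt_of_lt_of_le hl2 hLA
  have hr1 : 1 ≤ B / A := (one_le_div hA0).mpr hAB
  have hlr : 0 ≤ Real.log (B / A) := Real.log_nonneg hr1
  have key : Real.log (1 + B) ≤ Real.log (B / A) + Real.log (1 + A) := by
    have h1 : (1 + B) ≤ (B / A) * (1 + A) := by
      have : (B / A) * (1 + A) = B / A + B := by field_simp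
      rw [this]; linarith
    calc Real.log (1 + B) ≤ Real.log ((B / A) * (1 + A)) :=
          Real.log_le_log (by linarith) h1
      _ = Real.log (B / A) + Real.log (1 + A) :=
          Real.log_mul (by positivity) (by positivity)
  calc Real.log (1 + B) / Real.log (1 + A)
      ≤ (Real.log (B / A) + Real.log (1 + A)) / Real.log (1 + A) := by gcongr
    _ = Real.log (B / A) / Real.log (1 + A) + 1 := by field_simp
    _ ≤ Real.log (B / A) / Real.log 2 + 1 := by
        refine add_le_add ?_ le_rfl
        exact div_le_div_of_nonneg_left hlr hl2 hLA
    _ = 1 + Real.log (B / A) / Real.log 2 := by ring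

/-- Lipschitz property of the bracket. -/
lemma aux_lip (x t : ℝ) :
    Real.sqrt (1 + t ^ 2) ≤ Real.sqrt (1 + x ^ 2) + |t - x| := by
  set A := Real.sqrt (1 + x ^ 2) with hAdef
  have hA2 : A ^ 2 = 1 + x ^ 2 := Real.sq_sqrt (by positivity)
  have hx : |x| ≤ A := by
    rw [← Real.sqrt_sq_eq_abs]
    exact Real.sqrt_le_sqrt (by nlinarith)
  have h0 : 0 ≤ A + |t - x| := by positivity
  have hmul : x * (t - x) ≤ A * |t - x| := by
    calc x * (t - x) ≤ |x * (t - x)| := le_abs_self _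
      _ = |x| * |t - x| := abs_mul _ _
      _ ≤ A * |t - x| := mul_le_mul_of_nonneg_right hx (abs_nonneg _)
  calc Real.sqrt (1 + t ^ 2) ≤ Real.sqrt ((A + |t - x|) ^ 2) := by
        apply Real.sqrt_le_sqrt
        have hs : |t - x| ^ 2 = (t - x) ^ 2 := sq_abs _
        nlinarith [abs_nonneg (t - x)]
    _ = A + |t - x| := Real.sqrt_sq h0

/-- ratio in [1/2,2] has bounded rpow. -/
lemma aux_ratio_pow (r q : ℝ) (h1 : 1 / 2 ≤ r) (h2 : r ≤ 2) :
    r ^ (2 * q) ≤ 4 ^ |q| := by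
  have h24 : ((2:ℝ)) ^ ((2:ℕ):ℝ) = 4 := by rw [Real.rpow_natCast]; norm_num
  have h4 : ∀ w : ℝ, (4:ℝ) ^ w = (2:ℝ) ^ (2 * w) := by
    intro w
    rw [← h24, ← Real.rpow_mul (by norm_num)]
    norm_num
  rcases le_total 0 q with hq | hq
  · rw [abs_of_nonneg hq, h4]
    exact Real.rpow_le_rpow (by linarith) h2 (by linarith)
  · rw [abs_of_nonpos hq, h4]
    have : (2:ℝ) * -q = -(2 * q) := by ring
    rw [this, Real.rpow_neg (by norm_num)]
    have hhalf : ((2:ℝ))⁻¹ ^ (2 * q) = ((2:ℝ) ^ (2 * q))⁻¹ := Real.inv_rpow (by norm_num) _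
    calc r ^ (2 * q) ≤ ((1:ℝ)/2) ^ (2 * q) :=
          Real.rpow_le_rpow_of_nonpos (by linarith) h1 (by linarith)
      _ = ((2:ℝ) ^ (2 * q))⁻¹ := by rw [one_div, hhalf]

set_option maxHeartbeats 1000000 in
theorem stmt14 (c : ℝ) (hc : 0 < c) (s p : ℝ) (hs0 : 0 < s) (hs1 : s < 1) :
    ∃ C : ℝ, ∀ x y t : ℝ, |y| ≤ c * Real.sqrt (1 + x ^ 2) → ¬(y = 0 ∧ x = t) →
      (Real.log (1 + Real.sqrt (1 + t ^ 2)) ^ (2 * p)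
          / Real.log (1 + Real.sqrt (1 + x ^ 2)) ^ (2 * p))
        * (Real.sqrt (1 + t ^ 2) ^ (2 * s) / Real.sqrt (1 + x ^ 2) ^ (2 * s))
        * (y ^ 2 / ((t - x) ^ 2 + y ^ 2)) ≤ C := by
  obtain ⟨C₂, hC₂0, hC₂⟩ := aux_log_pow (2 * |p|) (2 - 2 * s) (by positivity) (by linarith)
  obtain ⟨C₃, hC₃0, hC₃⟩ := aux_log_pow (2 * |p|) (2 * s) (by positivity) (by linarith)
  refine ⟨4 ^ |p| * 4 + 4 * c ^ 2 * C₂ + 4 * c ^ 2 * C₃, ?_⟩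
  intro x y t hy hne
  set A := Real.sqrt (1 + x ^ 2) with hAdef
  set B := Real.sqrt (1 + t ^ 2) with hBdef
  have hA1 : (1:ℝ) ≤ A := by
    nlinarith [Real.sq_sqrt (show (0:ℝ) ≤ 1 + x ^ 2 by positivity),
      Real.sqrt_nonneg (1 + x ^ 2)]
  have hB1 : (1:ℝ) ≤ B := by
    nlinarith [Real.sq_sqrt (show (0:ℝ) ≤ 1 + t ^ 2 by positivity),
      Real.sqrt_nonneg (1 + t ^ 2)]
  have hA0 : (0:ℝ) < A := by linarith
  have hB0 : (0:ℝ) < B := by linarith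
  have hl2 : (0:ℝ) < Real.log 2 := Real.log_pos (by norm_num)
  have hLA : Real.log 2 ≤ Real.log (1 + A) := Real.log_le_log (by norm_num) (by linarith)
  have hLB : Real.log 2 ≤ Real.log (1 + B) := Real.log_le_log (by norm_num) (by linarith)
  have hLA0 : (0:ℝ) < Real.log (1 + A) := lt_of_lt_of_le hl2 hLA
  have hLB0 : (0:ℝ) < Real.log (1 + B) := lt_of_lt_of_le hl2 hLB
  set LA := Real.log (1 + A)
  set LB := Real.log (1 + B)
  have hD0 : (0:ℝ) < (t - x) ^ 2 + y ^ 2 := by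
    rcases eq_or_ne y 0 with hy0 | hy0
    · have hxt : t - x ≠ 0 := fun h => hne ⟨hy0, by linarith [sub_eq_zero.mp h]⟩
      have : (t - x) ^ 2 > 0 := by positivity
      nlinarith
    · have : y ^ 2 > 0 := by positivity
      nlinarith
  have hfrac1 : y ^ 2 / ((t - x) ^ 2 + y ^ 2) ≤ 1 := by
    rw [div_le_one hD0]; nlinarith
  have hfrac0 : 0 ≤ y ^ 2 / ((t - x) ^ 2 + y ^ 2) := by positivity
  have hR1eq : LB ^ (2 * p) / LA ^ (2 * p) = (LB / LA) ^ (2 * p) :=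
    (Real.div_rpow hLB0.le hLA0.le _).symm
  have hR2eq : B ^ (2 * s) / A ^ (2 * s) = (B / A) ^ (2 * s) :=
    (Real.div_rpow hB0.le hA0.le _).symm
  rw [hR1eq, hR2eq]
  have hR1nn : 0 ≤ (LB / LA) ^ (2 * p) := Real.rpow_nonneg (by positivity) _
  have hR2nn : 0 ≤ (B / A) ^ (2 * s) := Real.rpow_nonneg (by positivity) _
  have hterm1 : (0:ℝ) ≤ 4 ^ |p| * 4 := by positivity
  have hterm2 : (0:ℝ) ≤ 4 * c ^ 2 * C₂ := by positivity
  have hterm3 : (0:ℝ) ≤ 4 * c ^ 2 * C₃ := by positivity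
  rcases le_or_gt B (2 * A) with hB2A | hB2A
  · rcases le_or_gt A (2 * B) with hA2B | hA2B
    · -- comparable case
      have hLB2 : LB ≤ 2 * LA := by
        have h1 : 1 + B ≤ (1 + A) ^ 2 := by nlinarith
        calc LB ≤ Real.log ((1 + A) ^ 2) := Real.log_le_log (by linarith) h1
          _ = 2 * LA := by rw [Real.log_pow]; push_cast; ring
      have hLA2 : LA ≤ 2 * LB := by
        have h1 : 1 + A ≤ (1 + B) ^ 2 := by nlinarith
        calc LA ≤ Real.log ((1 + B) ^ 2) := Real.log_le_log (by linarith) h1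
          _ = 2 * LB := by rw [Real.log_pow]; push_cast; ring
      have hr1 : 1 / 2 ≤ LB / LA := by rw [div_le_div_iff₀ (by norm_num) hLA0]; linarith
      have hr2 : LB / LA ≤ 2 := by rw [div_le_iff₀ hLA0]; linarith
      have hb1 : (LB / LA) ^ (2 * p) ≤ 4 ^ |p| := aux_ratio_pow _ _ hr1 hr2
      have hs1' : (B / A) ^ (2 * s) ≤ 4 := by
        have hba : B / A ≤ 2 := by rw [div_le_iff₀ hA0]; linarith
        have h24 : ((2:ℝ)) ^ ((2:ℕ):ℝ) = 4 := by rw [Real.rpow_natCast]; norm_num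
        calc (B / A) ^ (2 * s) ≤ (2:ℝ) ^ (2 * s) :=
              Real.rpow_le_rpow (by positivity) hba (by linarith)
          _ ≤ (2:ℝ) ^ ((2:ℕ):ℝ) := by
              apply Real.rpow_le_rpow_of_exponent_le (by norm_num)
              push_cast; linarith
          _ = 4 := h24
      have : (LB / LA) ^ (2 * p) * (B / A) ^ (2 * s) * (y ^ 2 / ((t - x) ^ 2 + y ^ 2))
          ≤ 4 ^ |p| * 4 := by
        calc (LB / LA) ^ (2 * p) * (B / A) ^ (2 * s) * (y ^ 2 / ((t - x) ^ 2 + y ^ 2))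
            ≤ (LB / LA) ^ (2 * p) * (B / A) ^ (2 * s) * 1 :=
              mul_le_mul_of_nonneg_left hfrac1 (by positivity)
          _ = (LB / LA) ^ (2 * p) * (B / A) ^ (2 * s) := mul_one _
          _ ≤ 4 ^ |p| * 4 := mul_le_mul hb1 hs1' hR2nn (by positivity)
      linarith
    · -- A > 2B : u = A/B ≥ 2
      set u := A / B with hudef
      have hu2 : (2:ℝ) ≤ u := by rw [hudef, le_div_iff₀ hB0]; linarith
      have hu0 : (0:ℝ) < u := by linarith
      have hBA : B ≤ A := by linarith
      -- fraction bound: |t-x| ≥ A - B ≥ A/2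
      have hlip : A ≤ B + |t - x| := by
        have := aux_lip t x
        rw [← hAdef, ← hBdef] at this
        have habs : |x - t| = |t - x| := abs_sub_comm x t
        calc A ≤ B + |x - t| := by
              have h := aux_lip t x
              -- aux_lip t x : sqrt(1+x^2) ≤ sqrt(1+t^2) + |x - t|
              simpa [← hAdef, ← hBdef] using h
          _ = B + |t - x| := by rw [habs]
      have htx : A / 2 ≤ |t - x| := by linarith
      have hfracb : y ^ 2 / ((t - x) ^ 2 + y ^ 2) ≤ 4 * c ^ 2 := by
        have hy2 : y ^ 2 ≤ c ^ 2 * A ^ 2 := by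
          have := sq_abs y
          nlinarith [abs_nonneg y, Real.sqrt_nonneg (1 + x ^ 2)]
        have hd : (A / 2) ^ 2 ≤ (t - x) ^ 2 + y ^ 2 := by
          have h1 : (A / 2) ^ 2 ≤ |t - x| ^ 2 := by nlinarith
          rw [sq_abs] at h1; nlinarith
        calc y ^ 2 / ((t - x) ^ 2 + y ^ 2) ≤ c ^ 2 * A ^ 2 / ((A / 2) ^ 2) := by
              apply div_le_div₀ (by positivity) hy2 (by positivity) hd
          _ = 4 * c ^ 2 := by field_simp; ring
      -- R2 = u^{-2s}
      have hR2u : (B / A) ^ (2 * s) = u ^ (-(2 * s)) := by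
        rw [Real.rpow_neg hu0.le, hudef]
        rw [show B / A = (A / B)⁻¹ by rw [inv_div]]
        rw [Real.inv_rpow (by positivity)]
      -- R1 bound
      have hR1b : (LB / LA) ^ (2 * p) ≤ (1 + Real.log u / Real.log 2) ^ (2 * |p|) := by
        have hbase1 : (1:ℝ) ≤ 1 + Real.log u / Real.log 2 := by
          have : 0 ≤ Real.log u := Real.log_nonneg (by linarith)
          have : 0 ≤ Real.log u / Real.log 2 := by positivity
          linarith
        rcases le_total 0 p with hp | hp
        · have hle1 : LB / LA ≤ 1 := by
            rw [div_le_one hLA0]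
            exact Real.log_le_log (by linarith) (by linarith)
          calc (LB / LA) ^ (2 * p) ≤ 1 :=
                Real.rpow_le_one (by positivity) hle1 (by linarith)
            _ ≤ (1 + Real.log u / Real.log 2) ^ (2 * |p|) :=
                Real.one_le_rpow hbase1 (by positivity)
        · have hratio : LA / LB ≤ 1 + Real.log u / Real.log 2 := by
            have := aux_logratio B A hB1 hBA
            rw [← hudef] at this
            exact this
          have hinv : (LB / LA) ^ (2 * p) = (LA / LB) ^ (2 * -p) := by
            rw [show (2:ℝ) * -p = -(2 * p) by ring, Real.rpow_neg (by positivity),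
              ← Real.inv_rpow (by positivity), inv_div]
          rw [hinv, show 2 * |p| = 2 * -p by rw [abs_of_nonpos hp]]
          exact Real.rpow_le_rpow (by positivity) hratio (by linarith)
      have hkey : (1 + Real.log u / Real.log 2) ^ (2 * |p|) * u ^ (-(2 * s)) ≤ C₃ :=
        hC₃ u hu2
      calc (LB / LA) ^ (2 * p) * (B / A) ^ (2 * s) * (y ^ 2 / ((t - x) ^ 2 + y ^ 2))
          ≤ (1 + Real.log u / Real.log 2) ^ (2 * |p|) * u ^ (-(2 * s)) * (4 * c ^ 2) := by
            apply mul_le_mul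
            · rw [hR2u]
              exact mul_le_mul_of_nonneg_right hR1b (Real.rpow_nonneg hu0.le _)
            · exact hfracb
            · exact hfrac0
            · have hbase0 : (0:ℝ) ≤ 1 + Real.log u / Real.log 2 := by
                have h0 : (0:ℝ) ≤ Real.log u := Real.log_nonneg (by linarith)
                have hl2 : (0:ℝ) < Real.log 2 := Real.log_pos (by norm_num)
                positivity
              exact mul_nonneg (Real.rpow_nonneg hbase0 _) (Real.rpow_nonneg hu0.le _)
        _ ≤ C₃ * (4 * c ^ 2) := mul_le_mul_of_nonneg_right hkey (by positivity)
        _ = 4 * c ^ 2 * C₃ := by ring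
        _ ≤ 4 ^ |p| * 4 + 4 * c ^ 2 * C₂ + 4 * c ^ 2 * C₃ := by linarith
  · -- B > 2A : u = B/A ≥ 2
    set u := B / A with hudef
    have hu2 : (2:ℝ) ≤ u := by rw [hudef, le_div_iff₀ hA0]; linarith
    have hu0 : (0:ℝ) < u := by linarith
    have hAB : A ≤ B := by linarith
    have hlip : B ≤ A + |t - x| := by
      have h := aux_lip x t
      simpa [← hAdef, ← hBdef] using h
    have htx : B / 2 ≤ |t - x| := by linarith
    have hfracb : y ^ 2 / ((t - x) ^ 2 + y ^ 2) ≤ 4 * c ^ 2 * A ^ 2 / B ^ 2 := by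
      have hy2 : y ^ 2 ≤ c ^ 2 * A ^ 2 := by
        have := sq_abs y
        nlinarith [abs_nonneg y, Real.sqrt_nonneg (1 + x ^ 2)]
      have hd : (B / 2) ^ 2 ≤ (t - x) ^ 2 + y ^ 2 := by
        have h1 : (B / 2) ^ 2 ≤ |t - x| ^ 2 := by nlinarith
        rw [sq_abs] at h1; nlinarith
      calc y ^ 2 / ((t - x) ^ 2 + y ^ 2) ≤ c ^ 2 * A ^ 2 / ((B / 2) ^ 2) := by
            apply div_le_div₀ (by positivity) hy2 (by positivity) hd
        _ = 4 * c ^ 2 * A ^ 2 / B ^ 2 := by field_simp; ring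
    have hR1b : (LB / LA) ^ (2 * p) ≤ (1 + Real.log u / Real.log 2) ^ (2 * |p|) := by
      have hbase1 : (1:ℝ) ≤ 1 + Real.log u / Real.log 2 := by
        have : 0 ≤ Real.log u := Real.log_nonneg (by linarith)
        have : 0 ≤ Real.log u / Real.log 2 := by positivity
        linarith
      rcases le_total 0 p with hp | hp
      · have hratio : LB / LA ≤ 1 + Real.log u / Real.log 2 := by
          have := aux_logratio A B hA1 hAB
          rw [← hudef] at this
          exact this
        rw [show 2 * |p| = 2 * p by rw [abs_of_nonneg hp]]
        exact Real.rpow_le_rpow (by positivity) hratio (by linarith)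
      · have hge1 : 1 ≤ LB / LA := by
          rw [le_div_iff₀ hLA0]
          have : LA ≤ LB := Real.log_le_log (by linarith) (by linarith)
          linarith
        calc (LB / LA) ^ (2 * p) ≤ 1 :=
              Real.rpow_le_one_of_one_le_of_nonpos hge1 (by linarith)
          _ ≤ (1 + Real.log u / Real.log 2) ^ (2 * |p|) :=
              Real.one_le_rpow hbase1 (by positivity)
    -- combine: R2 * frac ≤ u^{2s} * 4c²/u² = 4c² u^{2s-2}
    have hR2u : (B / A) ^ (2 * s) = u ^ (2 * s) := by rw [hudef]
    have hu2eq : A ^ 2 / B ^ 2 = u ^ (-(2:ℝ)) := by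
      rw [hudef, Real.rpow_neg (by positivity)]
      rw [show ((2:ℝ)) = ((2:ℕ):ℝ) by norm_num, Real.rpow_natCast]
      rw [div_pow]
      field_simp
    have hcomb : u ^ (2 * s) * u ^ (-(2:ℝ)) = u ^ (-(2 - 2 * s)) := by
      rw [← Real.rpow_add hu0]; ring_nf
    have hkey : (1 + Real.log u / Real.log 2) ^ (2 * |p|) * u ^ (-(2 - 2 * s)) ≤ C₂ :=
      hC₂ u hu2
    have hfinal : (LB / LA) ^ (2 * p) * (B / A) ^ (2 * s) * (y ^ 2 / ((t - x) ^ 2 + y ^ 2))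
        ≤ 4 * c ^ 2 * C₂ := by
      calc (LB / LA) ^ (2 * p) * (B / A) ^ (2 * s) * (y ^ 2 / ((t - x) ^ 2 + y ^ 2))
          ≤ (1 + Real.log u / Real.log 2) ^ (2 * |p|) * u ^ (2 * s)
              * (4 * c ^ 2 * A ^ 2 / B ^ 2) := by
            apply mul_le_mul
            · rw [hR2u]
              exact mul_le_mul_of_nonneg_right hR1b (Real.rpow_nonneg hu0.le _)
            · exact hfracb
            · exact hfrac0
            · have hbase0 : (0:ℝ) ≤ 1 + Real.log u / Real.log 2 := by
                have h0 : (0:ℝ) ≤ Real.log u := Real.log_nonneg (by linarith)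
                have hl2 : (0:ℝ) < Real.log 2 := Real.log_pos (by norm_num)
                positivity
              exact mul_nonneg (Real.rpow_nonneg hbase0 _) (Real.rpow_nonneg hu0.le _)
        _ = 4 * c ^ 2 * ((1 + Real.log u / Real.log 2) ^ (2 * |p|)
              * (u ^ (2 * s) * (A ^ 2 / B ^ 2))) := by ring
        _ = 4 * c ^ 2 * ((1 + Real.log u / Real.log 2) ^ (2 * |p|) * u ^ (-(2 - 2 * s))) := by
            rw [hu2eq, hcomb]
        _ ≤ 4 * c ^ 2 * C₂ := by
            apply mul_le_mul_of_nonneg_left hkey (by positivity)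
    linarith
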